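/- Regard μ as a function of r ∈ [0,1], where μ(r) = r y₁(s₁^in − s̄₁) ∫₀¹ (1 − D / F(φ_ν(ŝ⁺(r)))) dν. If μ(1) > 0, then there exists a unique r_* ∈ [0,1) such that μ(r) > 0 for all r ∈ (r_*, 1] and μ(r) ≤ 0 for all r ∈ [0, r_*]. -/
import Mathlib


open Filter Set Topology

noncomputable section

/-- Hypotheses on the uptake function `F`: Lipschitz on the closed positive cone,
vanishing when some nutrient is exhausted, positive on the open positive cone, and
strictly increasing in each argument on the positive cone. -/
def FHyp {n : ℕ} (F : (Fin n → ℝ) → ℝ) : Prop :=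
  (∃ K : NNReal, LipschitzOnWith K F {s : Fin n → ℝ | ∀ i, 0 ≤ s i}) ∧
  (∀ s : Fin n → ℝ, (∀ i, 0 ≤ s i) → (∃ i, s i = 0) → F s = 0) ∧
  (∀ s : Fin n → ℝ, (∀ i, 0 < s i) → 0 < F s) ∧
  (∀ s : Fin n → ℝ, (∀ i, 0 < s i) → ∀ i : Fin n, ∀ ε : ℝ, 0 < ε →
    F s < F (Function.update s i (s i + ε)))

/-- The component Lyapunov-like function `V_i(s) = y₁(s₁ⁱⁿ - s₁) - y_i(s_iⁱⁿ - s_i)`. -/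
def Vfun {n : ℕ} [NeZero n] (y sIn : Fin n → ℝ) (i : Fin n) (s : Fin n → ℝ) : ℝ :=
  y 0 * (sIn 0 - s 0) - y i * (sIn i - s i)

/-- `V̄_i = y₁(s₁ⁱⁿ - s̄₁) - y_i s_iⁱⁿ`. -/
def Vbar {n : ℕ} [NeZero n] (y sIn : Fin n → ℝ) (sbar1 : ℝ) (i : Fin n) : ℝ :=
  y 0 * (sIn 0 - sbar1) - y i * sIn i

/-- `Ω₀ = {s ∈ ℝⁿ₊ : s₁ ≥ s̄₁, V_i(s) < V̄_i for at least one i = 2,…,n}`. -/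
def Omega0 {n : ℕ} [NeZero n] (y sIn : Fin n → ℝ) (sbar1 : ℝ) : Set (Fin n → ℝ) :=
  {s | (∀ i, 0 < s i) ∧ sbar1 ≤ s 0 ∧ ∃ i, i ≠ 0 ∧ Vfun y sIn i s < Vbar y sIn sbar1 i}

/-- `Ω₁ = {s ∈ ℝⁿ₊ : s₁ ≥ s̄₁, V_i(s) > V̄_i for all i = 2,…,n}`. -/
def Omega1 {n : ℕ} [NeZero n] (y sIn : Fin n → ℝ) (sbar1 : ℝ) : Set (Fin n → ℝ) :=
  {s | (∀ i, 0 < s i) ∧ sbar1 ≤ s 0 ∧ ∀ i, i ≠ 0 → Vbar y sIn sbar1 i < Vfun y sIn i s}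

/-- `φ_ν(s⁰) = s⁰ - ν y₁ (s₁⁰ - s̄₁) Y`, with `Y = (1/y₁, …, 1/yₙ)`. -/
def phiNu {n : ℕ} [NeZero n] (y : Fin n → ℝ) (sbar1 ν : ℝ) (s0 : Fin n → ℝ) : Fin n → ℝ :=
  fun i => s0 i - ν * (y 0 * (s0 0 - sbar1)) * (1 / y i)

/-- `I(s⁰) = y₁ (s₁⁰ - s̄₁) ∫₀¹ (1 - D / F(φ_ν(s⁰))) dν`, the net biomass change over one cycle. -/
def Ifun {n : ℕ} [NeZero n] (F : (Fin n → ℝ) → ℝ) (D : ℝ) (y : Fin n → ℝ)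
    (sbar1 : ℝ) (s0 : Fin n → ℝ) : ℝ :=
  y 0 * (s0 0 - sbar1) * ∫ ν in (0:ℝ)..1, (1 - D / F (phiNu y sbar1 ν s0))

/-- `ŝ⁺(r) = sⁱⁿ - (1 - r) y₁ (s₁ⁱⁿ - s̄₁) Y`. -/
def shatP {n : ℕ} [NeZero n] (y sIn : Fin n → ℝ) (sbar1 r : ℝ) : Fin n → ℝ :=
  fun i => sIn i - (1 - r) * (y 0 * (sIn 0 - sbar1)) * (1 / y i)

/-- `μ(r) = y₁ (s̄₁⁺ - s̄₁) ∫₀¹ (1 - D / F(φ_ν(ŝ⁺(r)))) dν`, where `s̄₁⁺ = r s₁ⁱⁿ + (1-r) s̄₁`. -/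
def muFun {n : ℕ} [NeZero n] (F : (Fin n → ℝ) → ℝ) (D : ℝ) (y sIn : Fin n → ℝ)
    (sbar1 r : ℝ) : ℝ :=
  y 0 * ((r * sIn 0 + (1 - r) * sbar1) - sbar1) *
    ∫ ν in (0:ℝ)..1, (1 - D / F (phiNu y sbar1 ν (shatP y sIn sbar1 r)))

/-- `Γ_ρ⁺ = {s ∈ ℝⁿ₊ : s₁ = s̄₁⁺, V_i(s) > -ρ for all i = 2,…,n}`. -/
def GammaRho {n : ℕ} [NeZero n] (y sIn : Fin n → ℝ) (sbar1 r ρ : ℝ) : Set (Fin n → ℝ) :=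
  {s | (∀ i, 0 < s i) ∧ s 0 = r * sIn 0 + (1 - r) * sbar1 ∧
    ∀ i, i ≠ 0 → -ρ < Vfun y sIn i s}

/-- `Ω^ρ = {s ∈ Ω₁ : V_i(s) > -ρ for all i = 2,…,n}`. -/
def OmegaRho {n : ℕ} [NeZero n] (y sIn : Fin n → ℝ) (sbar1 ρ : ℝ) : Set (Fin n → ℝ) :=
  {s | s ∈ Omega1 y sIn sbar1 ∧ ∀ i, i ≠ 0 → -ρ < Vfun y sIn i s}

/-- The cycle map `s ↦ g(φ₁(s)) = r sⁱⁿ + (1 - r) φ₁(s)`. -/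
def cycMap {n : ℕ} [NeZero n] (y sIn : Fin n → ℝ) (sbar1 r : ℝ)
    (s : Fin n → ℝ) : Fin n → ℝ :=
  fun i => r * sIn i + (1 - r) * phiNu y sbar1 1 s i

/-- A (right-continuous) solution of the impulsive self-cycling fermentation model
`eq:model`: between impulse times the ODEs hold, impulse times are exactly the times
where the left limit of `s₁` equals the threshold `s̄₁`, and at an impulse time the
state jumps according to the decanting/refilling map. -/
structure SCFSol (n : ℕ) [NeZero n] (F : (Fin n → ℝ) → ℝ) (D : ℝ) (y : Fin n → ℝ)
    (r : ℝ) (sIn : Fin n → ℝ) (sbar1 : ℝ) where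
  /-- nutrient concentrations -/
  s : ℝ → Fin n → ℝ
  /-- biomass concentration -/
  x : ℝ → ℝ
  /-- the set of impulse times -/
  T : Set ℝ
  /-- left limits of `s` (meaningful at impulse times) -/
  sLim : ℝ → Fin n → ℝ
  /-- left limit of `x` (meaningful at impulse times) -/
  xLim : ℝ → ℝ
  T_pos : ∀ t ∈ T, 0 < t
  init : sbar1 < s 0 0
  ode_s : ∀ t : ℝ, 0 ≤ t → t ∉ T → ∀ i,
    HasDerivAt (fun τ => s τ i) (-(1 / y i) * F (s t) * x t) t
  ode_x : ∀ t : ℝ, 0 ≤ t → t ∉ T →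
    HasDerivAt x ((-D + F (s t)) * x t) t
  left_s : ∀ t ∈ T, ∀ i,
    Filter.Tendsto (fun τ => s τ i) (nhdsWithin t (Set.Iio t)) (nhds (sLim t i))
  left_x : ∀ t ∈ T, Filter.Tendsto x (nhdsWithin t (Set.Iio t)) (nhds (xLim t))
  hit : ∀ t ∈ T, sLim t 0 = sbar1
  exact_hit : ∀ t : ℝ, 0 < t → t ∉ T → s t 0 ≠ sbar1
  jump_s : ∀ t ∈ T, ∀ i, s t i = r * sIn i + (1 - r) * sLim t i
  jump_x : ∀ t ∈ T, x t = (1 - r) * xLim t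

/-- Convergence of a solution to the unique periodic orbit: there are infinitely many
impulses and, along the (increasing) enumeration of the impulse times, the post-impulse
nutrient states converge to `ŝ⁺(r)`, the post-impulse biomass converges to
`((1-r)/r) μ(r)`, and the pre-impulse biomass converges to `(1/r) μ(r)`. -/
def ConvergesToPeriodic {n : ℕ} [NeZero n] {F : (Fin n → ℝ) → ℝ} {D : ℝ}
    {y : Fin n → ℝ} {r : ℝ} {sIn : Fin n → ℝ} {sbar1 : ℝ}
    (sol : SCFSol n F D y r sIn sbar1) : Prop :=
  sol.T.Infinite ∧
  ∀ tk : ℕ → ℝ, StrictMono tk → Set.range tk = sol.T →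
    (∀ i, Filter.Tendsto (fun k => sol.s (tk k) i) Filter.atTop
      (nhds (shatP y sIn sbar1 r i))) ∧
    Filter.Tendsto (fun k => sol.x (tk k)) Filter.atTop
      (nhds ((1 - r) / r * muFun F D y sIn sbar1 r)) ∧
    Filter.Tendsto (fun k => sol.xLim (tk k)) Filter.atTop
      (nhds (1 / r * muFun F D y sIn sbar1 r))

lemma Fmono' {n : ℕ} {F : (Fin n → ℝ) → ℝ} (hF : FHyp F)
    {a b : Fin n → ℝ} (ha : ∀ i, 0 < a i) (hb : ∀ i, 0 < b i)
    (hab : ∀ i, a i ≤ b i) : F a ≤ F b := by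
  obtain ⟨-, -, -, hmono⟩ := hF
  have key : ∀ t : Finset (Fin n), F a ≤ F (fun i => if i ∈ t then b i else a i) := by
    intro t
    induction t using Finset.induction_on with
    | empty => simp
    | @insert j t hj ih =>
      set cfun : Fin n → ℝ := fun i => if i ∈ t then b i else a i with hcfun
      have hc : ∀ i, 0 < cfun i := by
        intro i; by_cases h : i ∈ t <;> simp only [hcfun, h, if_true, if_false]
        · exact hb i
        · exact ha i
      have heqf : (fun i => if i ∈ insert j t then b i else a i)
          = Function.update cfun j (b j) := by
        funext i
        rcases eq_or_ne i j with rfl | h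
        · simp [hcfun, Function.update_self, hj]
        · simp [Function.update_of_ne h, hcfun, Finset.mem_insert, h]
      rw [heqf]
      have hcj : cfun j = a j := by simp [hcfun, hj]
      rcases eq_or_lt_of_le (hab j) with heq | hlt
      · have : Function.update cfun j (b j) = cfun := by
          rw [← heq, ← hcj, Function.update_eq_self]
        rw [this]; exact ih
      · have h2 := hmono cfun hc j (b j - a j) (by linarith)
        rw [hcj] at h2
        have h3 : a j + (b j - a j) = b j := by ring
        rw [h3] at h2
        exact ih.trans h2.le
  have := key Finset.univ
  simpa using this

/-- Proposition 3.8: regarding `μ` as a function of `r ∈ [0,1]`, if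
`μ(1) > 0` then there is a unique `r⋆ ∈ [0,1)` such that `μ(r) > 0` on `(r⋆, 1]` and
`μ(r) ≤ 0` on `[0, r⋆]`. -/
theorem scf_rstar_exists_unique {n : ℕ} [NeZero n] (F : (Fin n → ℝ) → ℝ) (hF : FHyp F)
    (D : ℝ) (hD : 0 < D) (y : Fin n → ℝ) (hy : ∀ i, 0 < y i)
    (sIn : Fin n → ℝ) (hsIn : ∀ i, 0 < sIn i)
    (sbar1 : ℝ) (hsbar1 : 0 < sbar1) (hsbar1' : sbar1 < sIn 0)
    (hOm : sIn ∈ Omega1 y sIn sbar1)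
    (hmu1 : 0 < muFun F D y sIn sbar1 1) :
    ∃! rstar : ℝ, rstar ∈ Set.Ico (0:ℝ) 1 ∧
      (∀ r' ∈ Set.Ioc rstar 1, 0 < muFun F D y sIn sbar1 r') ∧
      (∀ r' ∈ Set.Icc (0:ℝ) rstar, muFun F D y sIn sbar1 r' ≤ 0) := by
  obtain ⟨K, hK⟩ := hF.1
  have hpos := hF.2.2.1
  set c : ℝ := y 0 * (sIn 0 - sbar1) with hc
  have hy0 : (0:ℝ) < y 0 := hy 0
  have hcpos : 0 < c := mul_pos hy0 (by linarith)
  set Pf : ℝ × ℝ → Fin n → ℝ :=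
    fun p i => sIn i - (1 - p.1 * (1 - p.2)) * (c * (1 / y i)) with hPfdef
  have hPf : ∀ r ν : ℝ, phiNu y sbar1 ν (shatP y sIn sbar1 r) = Pf (r, ν) := by
    intro r ν
    funext i
    have hyi : y i ≠ 0 := (hy i).ne'
    have hy0' : y 0 ≠ 0 := hy0.ne'
    simp only [phiNu, shatP, hPfdef, hc]
    field_simp
    ring
  have hcomp : ∀ i, c < y i * sIn i := by
    intro i
    rcases eq_or_ne i 0 with rfl | hi
    · rw [hc]; nlinarith [hy 0, hsbar1]
    · have h := hOm.2.2 i hi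
      simp only [Vbar, Vfun, sub_self, mul_zero, zero_sub, neg_lt, neg_zero] at h
      rw [hc]; linarith
  have hposP : ∀ r ∈ Icc (0:ℝ) 1, ∀ ν ∈ Icc (0:ℝ) 1, ∀ i, 0 < Pf (r, ν) i := by
    intro r hr ν hν i
    have hyi := hy i
    have hq1 : 1 - r * (1 - ν) ≤ 1 := by nlinarith [hr.1, hν.2]
    have hcy : 0 < c * (1 / y i) := mul_pos hcpos (one_div_pos.mpr hyi)
    have hkey : c * (1 / y i) < sIn i := by
      rw [mul_one_div, div_lt_iff₀ hyi, mul_comm]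
      exact hcomp i
    have hqle : (1 - r * (1 - ν)) * (c * (1 / y i)) ≤ c * (1 / y i) :=
      mul_le_of_le_one_left hcy.le hq1
    simp only [hPfdef]
    linarith
  have hPfcont : Continuous Pf := by
    apply continuous_pi
    intro i
    fun_prop
  set Kc : Set (Fin n → ℝ) := Pf '' (Icc (0:ℝ) 1 ×ˢ Icc (0:ℝ) 1) with hKc
  have hKcomp : IsCompact Kc := (isCompact_Icc.prod isCompact_Icc).image hPfcont
  have hKsub : Kc ⊆ {s : Fin n → ℝ | ∀ i, 0 ≤ s i} := by
    rintro _ ⟨⟨r, ν⟩, ⟨hr, hν⟩, rfl⟩ i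
    exact (hposP r hr ν hν i).le
  have hFcont : ContinuousOn F Kc := hK.continuousOn.mono hKsub
  have hKne : Kc.Nonempty :=
    ⟨Pf (0, 0), ⟨(0, 0), ⟨⟨le_refl 0, zero_le_one⟩, ⟨le_refl 0, zero_le_one⟩⟩, rfl⟩⟩
  obtain ⟨z, hzK, hzmin⟩ := hKcomp.exists_isMinOn hKne hFcont
  set m : ℝ := F z with hm
  have hmpos : 0 < m := by
    obtain ⟨⟨r, ν⟩, ⟨hr, hν⟩, rfl⟩ := hzK
    exact hpos _ (fun i => hposP r hr ν hν i)
  have hFlb : ∀ r ∈ Icc (0:ℝ) 1, ∀ ν ∈ Icc (0:ℝ) 1, m ≤ F (Pf (r, ν)) :=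
    fun r hr ν hν => hzmin ⟨(r, ν), ⟨hr, hν⟩, rfl⟩
  set g : ℝ → ℝ := fun r => ∫ ν in (0:ℝ)..1, (1 - D / F (Pf (r, ν))) with hg
  have hmu_eq : ∀ r : ℝ, muFun F D y sIn sbar1 r = (r * c) * g r := by
    intro r
    unfold muFun
    simp only [hPf, hg]
    rw [show y 0 * ((r * sIn 0 + (1 - r) * sbar1) - sbar1) = r * c by rw [hc]; ring]
  have hInt : ∀ r ∈ Icc (0:ℝ) 1,
      IntervalIntegrable (fun ν => 1 - D / F (Pf (r, ν))) MeasureTheory.volume 0 1 := by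
    intro r hr
    apply ContinuousOn.intervalIntegrable
    rw [uIcc_of_le zero_le_one]
    have h1 : ContinuousOn (fun ν : ℝ => Pf (r, ν)) (Icc 0 1) :=
      (hPfcont.comp (continuous_const.prodMk continuous_id)).continuousOn
    have h2 : ContinuousOn (fun ν : ℝ => F (Pf (r, ν))) (Icc 0 1) :=
      hFcont.comp h1 (fun ν hν => ⟨(r, ν), ⟨hr, hν⟩, rfl⟩)
    exact continuousOn_const.sub (continuousOn_const.div h2
      (fun ν hν => (lt_of_lt_of_le hmpos (hFlb r hr ν hν)).ne'))
  have hgmono : ∀ r₁ ∈ Icc (0:ℝ) 1, ∀ r₂ ∈ Icc (0:ℝ) 1, r₁ ≤ r₂ → g r₁ ≤ g r₂ := by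
    intro r₁ h₁ r₂ h₂ h12
    apply intervalIntegral.integral_mono_on zero_le_one (hInt r₁ h₁) (hInt r₂ h₂)
    intro ν hν
    have hF1 : 0 < F (Pf (r₁, ν)) := lt_of_lt_of_le hmpos (hFlb r₁ h₁ ν hν)
    have hF2 : 0 < F (Pf (r₂, ν)) := lt_of_lt_of_le hmpos (hFlb r₂ h₂ ν hν)
    have hle : F (Pf (r₁, ν)) ≤ F (Pf (r₂, ν)) := by
      apply Fmono' hF (hposP r₁ h₁ ν hν) (hposP r₂ h₂ ν hν)
      intro i
      have hX : 0 ≤ c * (1 / y i) := le_of_lt (mul_pos hcpos (one_div_pos.mpr (hy i)))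
      have h5 : 0 ≤ (r₂ - r₁) * ((1 - ν) * (c * (1 / y i))) :=
        mul_nonneg (by linarith) (mul_nonneg (by linarith [hν.2]) hX)
      simp only [hPfdef]
      nlinarith [h5]
    have hdiv : D / F (Pf (r₂, ν)) ≤ D / F (Pf (r₁, ν)) :=
      div_le_div_of_nonneg_left hD.le hF1 hle
    linarith
  -- continuous extension of `g`
  set proj : ℝ × ℝ → ℝ × ℝ :=
    fun p => (max 0 (min 1 p.1), max 0 (min 1 p.2)) with hproj
  have hprojcont : Continuous proj := by fun_prop
  have hprojmem : ∀ p, proj p ∈ Icc (0:ℝ) 1 ×ˢ Icc (0:ℝ) 1 := by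
    intro p
    refine ⟨⟨le_max_left _ _, max_le zero_le_one (min_le_left _ _)⟩,
      ⟨le_max_left _ _, max_le zero_le_one (min_le_left _ _)⟩⟩
  have hprojid : ∀ p ∈ Icc (0:ℝ) 1 ×ˢ Icc (0:ℝ) 1, proj p = p := by
    rintro ⟨r, ν⟩ ⟨⟨h1, h2⟩, ⟨h3, h4⟩⟩
    simp [hproj, min_eq_right h2, max_eq_right h1, min_eq_right h4, max_eq_right h3]
  set G : ℝ → ℝ :=
    fun r => ∫ ν in (0:ℝ)..1, (1 - D / max m (F (Pf (proj (r, ν))))) with hG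
  have hFP : Continuous (fun p : ℝ × ℝ => F (Pf (proj p))) :=
    hFcont.comp_continuous (hPfcont.comp hprojcont)
      (fun p => ⟨proj p, hprojmem p, rfl⟩)
  have hGcont : Continuous G := by
    apply intervalIntegral.continuous_parametric_intervalIntegral_of_continuous'
    have hden : Continuous (fun p : ℝ × ℝ => max m (F (Pf (proj p)))) :=
      continuous_const.max hFP
    exact continuous_const.sub (continuous_const.div hden
      (fun p => (lt_of_lt_of_le hmpos (le_max_left _ _)).ne'))
  have hGg : ∀ r ∈ Icc (0:ℝ) 1, G r = g r := by
    intro r hr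
    apply intervalIntegral.integral_congr
    intro ν hν
    rw [uIcc_of_le zero_le_one] at hν
    show 1 - D / max m (F (Pf (proj (r, ν)))) = 1 - D / F (Pf (r, ν))
    rw [hprojid (r, ν) ⟨hr, hν⟩, max_eq_right (hFlb r hr ν hν)]
  -- the threshold
  set S : Set ℝ := {r | r ∈ Icc (0:ℝ) 1 ∧ muFun F D y sIn sbar1 r ≤ 0} with hS
  have h0S : (0:ℝ) ∈ S := ⟨⟨le_refl 0, zero_le_one⟩, by rw [hmu_eq]; simp⟩
  have hSbdd : BddAbove S := ⟨1, fun r hr => hr.1.2⟩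
  set rstar : ℝ := sSup S with hrstar
  have hrs0 : 0 ≤ rstar := le_csSup hSbdd h0S
  have hrs1 : rstar ≤ 1 := csSup_le ⟨0, h0S⟩ (fun r hr => hr.1.2)
  have hrsIcc : rstar ∈ Icc (0:ℝ) 1 := ⟨hrs0, hrs1⟩
  have hmu_rstar : muFun F D y sIn sbar1 rstar ≤ 0 := by
    rcases eq_or_lt_of_le hrs0 with h0 | h0
    · rw [← h0, hmu_eq]; simp
    · have hgle : g rstar ≤ 0 := by
        by_contra hgt
        push_neg at hgt
        have hGrs : 0 < G rstar := by rw [hGg rstar hrsIcc]; exact hgt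
        obtain ⟨δ, hδpos, hδ⟩ := Metric.continuousAt_iff.mp hGcont.continuousAt (G rstar) hGrs
        set ε' : ℝ := min δ rstar with hε'
        have hε'pos : 0 < ε' := lt_min hδpos h0
        obtain ⟨r, hrS, hrgt⟩ := exists_lt_of_lt_csSup ⟨0, h0S⟩
          (show rstar - ε' < rstar by linarith)
        have hrle : r ≤ rstar := le_csSup hSbdd hrS
        have hrpos : 0 < r := by
          have : rstar - ε' ≥ 0 := by
            have : ε' ≤ rstar := min_le_right _ _
            linarith
          linarith
        have hdist : dist r rstar < δ := by
          rw [Real.dist_eq, abs_of_nonpos (by linarith)]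
          have : ε' ≤ δ := min_le_left _ _
          linarith
        have hGr : 0 < G r := by
          have := hδ hdist
          rw [Real.dist_eq, abs_lt] at this
          linarith
        have hgr : g r ≤ 0 := by
          have hmu := hrS.2
          rw [hmu_eq] at hmu
          by_contra hh
          push_neg at hh
          have := mul_pos (mul_pos hrpos hcpos) hh
          linarith
        rw [hGg r hrS.1] at hGr
        linarith
      rw [hmu_eq]
      nlinarith [mul_pos h0 hcpos]
  have hrslt1 : rstar < 1 := by
    rcases eq_or_lt_of_le hrs1 with h | h
    · rw [h] at hmu_rstar; linarith
    · exact h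
  have hprop1 : ∀ r' ∈ Ioc rstar 1, 0 < muFun F D y sIn sbar1 r' := by
    intro r' hr'
    by_contra hle
    push_neg at hle
    have hmem : r' ∈ S := ⟨⟨le_trans hrs0 hr'.1.le, hr'.2⟩, hle⟩
    exact absurd (le_csSup hSbdd hmem) (not_le.mpr hr'.1)
  have hprop2 : ∀ r' ∈ Icc (0:ℝ) rstar, muFun F D y sIn sbar1 r' ≤ 0 := by
    rintro r' ⟨h0', h1'⟩
    rcases eq_or_lt_of_le h0' with h | h
    · rw [← h, hmu_eq]; simp
    · have hrspos : 0 < rstar := lt_of_lt_of_le h h1'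
      have hgrs : g rstar ≤ 0 := by
        have hmu := hmu_rstar
        rw [hmu_eq] at hmu
        by_contra hh
        push_neg at hh
        have := mul_pos (mul_pos hrspos hcpos) hh
        linarith
      have hmn := hgmono r' ⟨h0', le_trans h1' hrs1⟩ rstar hrsIcc h1'
      have hgr' : g r' ≤ 0 := le_trans hmn hgrs
      rw [hmu_eq]
      nlinarith [mul_pos h hcpos]
  refine ⟨rstar, ⟨⟨hrs0, hrslt1⟩, hprop1, hprop2⟩, ?_⟩
  rintro r' ⟨hr'Ico, hp1, hp2⟩
  by_contra hne
  rcases lt_or_gt_of_ne hne with hlt | hgt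
  · exact absurd (hp1 rstar ⟨hlt, hrs1⟩)
      (not_lt.mpr (hprop2 rstar ⟨hrs0, le_refl _⟩))
  · exact absurd (hprop1 r' ⟨hgt, hr'Ico.2.le⟩)
      (not_lt.mpr (hp2 r' ⟨hr'Ico.1, le_refl _⟩))

end
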